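/- Let s > 0, r ∈ ℕ, and let S(r,s) = { A ∈ ℝ^{m×d} : rank(A) ≤ r, ‖A‖ ≤ s } where ‖·‖ is the spectral norm. For every ε > 0 there exists a finite set C ⊆ S(r,s) such that every A ∈ S(r,s) is within spectral-norm distance ε of some element of C, and log|C| ≤ (m+d) · r · log(1 + 6s/ε). -/

import Mathlib

open Metric MeasureTheory Module
open scoped ENNReal

/-- Spectral (operator) norm of a real matrix. -/
noncomputable def specNorm {m n : ℕ} (A : Matrix (Fin m) (Fin n) ℝ) : ℝ :=
  ‖LinearMap.toContinuousLinearMap (Matrix.toEuclideanLin A)‖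


open Metric MeasureTheory Module
open scoped ENNReal

lemma exists_net (E : Type*) [NormedAddCommGroup E] [NormedSpace ℝ E] [FiniteDimensional ℝ E]
    {κ δ : ℝ} (hκ : 0 ≤ κ) (hδ : 0 < δ) :
    ∃ N : Finset E, ↑N ⊆ closedBall (0:E) κ ∧
      (∀ x ∈ closedBall (0:E) κ, ∃ y ∈ N, ‖x - y‖ ≤ δ) ∧
      (N.card : ℝ) ≤ (1 + 2 * κ / δ) ^ (Module.finrank ℝ E) := by
  classical
  borelize E
  set D := Module.finrank ℝ E with hD
  set R : ℝ := (1 + 2 * κ / δ) ^ D with hR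
  let μ : Measure E := (Module.finBasis ℝ E).addHaar
  have hδ2 : (0:ℝ) < δ / 2 := by positivity
  set c : ℝ≥0∞ := μ (ball (0:E) 1) with hc
  have hc0 : c ≠ 0 := (measure_ball_pos μ 0 one_pos).ne'
  have hctop : c ≠ ⊤ := measure_ball_lt_top.ne
  have key : ∀ S : Finset E, ↑S ⊆ closedBall (0:E) κ →
      ((S : Set E).Pairwise fun x y => δ < dist x y) → (S.card : ℝ) ≤ R := by
    intro S hS hsep
    have hdisj : (S : Set E).PairwiseDisjoint (fun x => ball x (δ/2)) := by
      intro x hx y hy hxy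
      apply Set.disjoint_left.2
      intro z hzx hzy
      have h1 : dist x y ≤ δ := by
        calc dist x y ≤ dist x z + dist z y := dist_triangle _ _ _
          _ ≤ δ/2 + δ/2 := by
              refine add_le_add ?_ (mem_ball.1 hzy).le
              rw [dist_comm x z]
              exact (mem_ball.1 hzx).le
          _ = δ := by ring
      exact absurd (hsep hx hy hxy) (not_lt.2 h1)
    have hunion : (⋃ x ∈ S, ball x (δ/2)) ⊆ ball (0:E) (κ + δ/2) := by
      intro z hz
      simp only [Set.mem_iUnion] at hz
      obtain ⟨x, hxS, hzx⟩ := hz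
      have hx : dist x 0 ≤ κ := mem_closedBall.1 (hS hxS)
      have : dist z 0 < κ + δ/2 := by
        calc dist z 0 ≤ dist z x + dist x 0 := dist_triangle _ _ _
          _ < δ/2 + κ := add_lt_add_of_lt_of_le (mem_ball.1 hzx) hx
          _ = κ + δ/2 := by ring
      exact mem_ball.2 this
    have h1 : ∑ x ∈ S, μ (ball x (δ/2)) ≤ μ (ball (0:E) (κ + δ/2)) := by
      rw [← measure_biUnion_finset hdisj (fun _ _ => measurableSet_ball)]
      exact measure_mono hunion
    have hball : ∀ x : E, μ (ball x (δ/2)) = ENNReal.ofReal ((δ/2) ^ D) * c := fun x =>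
      Measure.addHaar_ball_of_pos μ x hδ2
    have hball2 : μ (ball (0:E) (κ + δ/2)) = ENNReal.ofReal ((κ + δ/2) ^ D) * c :=
      Measure.addHaar_ball_of_pos μ 0 (by positivity)
    rw [hball2] at h1
    simp only [hball, Finset.sum_const, nsmul_eq_mul] at h1
    rw [← mul_assoc] at h1
    have h2 : (S.card : ℝ≥0∞) * ENNReal.ofReal ((δ/2) ^ D) ≤ ENNReal.ofReal ((κ + δ/2) ^ D) :=
      (ENNReal.mul_le_mul_iff_left hc0 hctop).1 h1
    have h3 : (S.card : ℝ) * (δ/2) ^ D ≤ (κ + δ/2) ^ D := by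
      have h2' : ENNReal.ofReal ((S.card : ℝ) * (δ/2) ^ D) ≤ ENNReal.ofReal ((κ + δ/2) ^ D) := by
        rw [ENNReal.ofReal_mul (Nat.cast_nonneg _), ENNReal.ofReal_natCast]
        exact h2
      exact (ENNReal.ofReal_le_ofReal_iff (by positivity)).1 h2'
    rw [hR]
    have hbase : (κ + δ/2) / (δ/2) = 1 + 2 * κ / δ := by
      field_simp
      ring
    calc (S.card : ℝ) ≤ (κ + δ/2) ^ D / (δ/2) ^ D := by
          rw [le_div_iff₀ (by positivity)]
          exact h3
      _ = ((κ + δ/2) / (δ/2)) ^ D := by rw [← div_pow]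
      _ = (1 + 2 * κ / δ) ^ D := by rw [hbase]
  -- now pick a maximal separated set
  set P : Finset E → Prop := fun S => ↑S ⊆ closedBall (0:E) κ ∧
      ((S : Set E).Pairwise fun x y => δ < dist x y) with hP
  set T : Set ℕ := {n | ∃ S : Finset E, P S ∧ S.card = n} with hT
  have hT0 : 0 ∈ T := ⟨∅, ⟨by simp, by simp⟩, rfl⟩
  have hbdd : BddAbove T := by
    refine ⟨Nat.floor R, ?_⟩
    rintro n ⟨S, hPS, rfl⟩
    exact Nat.le_floor (key S hPS.1 hPS.2)
  obtain ⟨S, hPS, hScard⟩ := Nat.sSup_mem ⟨0, hT0⟩ hbdd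
  refine ⟨S, hPS.1, ?_, key S hPS.1 hPS.2⟩
  intro x hx
  by_contra hcon
  push_neg at hcon
  have hxall : ∀ y ∈ S, δ < dist x y := by
    intro y hy
    rw [dist_eq_norm]
    exact hcon y hy
  have hxS : x ∉ S := by
    intro hmem
    have := hxall x hmem
    simp at this
    exact absurd this (not_lt.2 hδ.le)
  have hP' : P (insert x S) := by
    constructor
    · rw [Finset.coe_insert]
      exact Set.insert_subset hx hPS.1
    · rw [Finset.coe_insert]
      refine Set.Pairwise.insert hPS.2 ?_
      intro y hy _
      exact ⟨hxall y hy, by rw [dist_comm]; exact hxall y hy⟩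
  have : S.card + 1 ∈ T := ⟨insert x S, hP', by rw [Finset.card_insert_of_notMem hxS]⟩
  have hle := le_csSup hbdd this
  rw [hScard] at hle
  omega



section Pad
variable {k r : ℕ} (hk : k ≤ r)

noncomputable def padQ (hk : k ≤ r) :
    EuclideanSpace ℝ (Fin r) →ₗ[ℝ] EuclideanSpace ℝ (Fin k) where
  toFun x := WithLp.toLp 2 (fun i => x (Fin.castLE hk i))
  map_add' x y := rfl
  map_smul' c x := rfl

noncomputable def padP (hk : k ≤ r) :
    EuclideanSpace ℝ (Fin k) →ₗ[ℝ] EuclideanSpace ℝ (Fin r) where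
  toFun z := WithLp.toLp 2 (fun j => if h : (j : ℕ) < k then z ⟨j, h⟩ else 0)
  map_add' z w := by
    ext j
    by_cases h : (j : ℕ) < k <;> simp [h]
  map_smul' c z := by
    ext j
    by_cases h : (j : ℕ) < k <;> simp [h]

lemma padQ_padP (z : EuclideanSpace ℝ (Fin k)) : padQ hk (padP hk z) = z := by
  ext i
  simp only [padQ, padP, LinearMap.coe_mk, AddHom.coe_mk, WithLp.ofLp_toLp]
  change (if h : ((Fin.castLE hk i : Fin r) : ℕ) < k then z.ofLp ⟨(Fin.castLE hk i : ℕ), h⟩ else 0) = z.ofLp i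
  rw [dif_pos (by simpa using i.isLt)]
  exact congrArg z (Fin.ext rfl)

lemma mem_image_castLE (j : Fin r) :
    j ∈ Finset.univ.image (Fin.castLE hk) ↔ (j : ℕ) < k := by
  simp only [Finset.mem_image, Finset.mem_univ, true_and]
  constructor
  · rintro ⟨i, rfl⟩; simpa using i.isLt
  · intro h; exact ⟨⟨j, h⟩, Fin.ext rfl⟩

lemma norm_padP (z : EuclideanSpace ℝ (Fin k)) : ‖padP hk z‖ = ‖z‖ := by
  rw [EuclideanSpace.norm_eq, EuclideanSpace.norm_eq]
  congr 1
  rw [← Finset.sum_subset (Finset.subset_univ (Finset.univ.image (Fin.castLE hk)))]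
  · rw [Finset.sum_image (fun x _ y _ h => Fin.castLE_injective hk h)]
    refine Finset.sum_congr rfl fun i _ => ?_
    have : (padP hk z) (Fin.castLE hk i) = z i := by
      simp only [padP, LinearMap.coe_mk, AddHom.coe_mk, WithLp.ofLp_toLp]
      rw [dif_pos (by simpa using i.isLt)]
      exact congrArg z (Fin.ext rfl)
    rw [this]
  · intro j _ hj
    have : (padP hk z) j = 0 := by
      simp only [padP, LinearMap.coe_mk, AddHom.coe_mk, WithLp.ofLp_toLp]
      rw [dif_neg (by simpa using (mem_image_castLE hk j).not.1 hj)]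
    rw [this]
    simp

lemma norm_padQ (x : EuclideanSpace ℝ (Fin r)) : ‖padQ hk x‖ ≤ ‖x‖ := by
  rw [EuclideanSpace.norm_eq, EuclideanSpace.norm_eq]
  apply Real.sqrt_le_sqrt
  calc (∑ i : Fin k, ‖(padQ hk x) i‖ ^ 2)
      = ∑ j ∈ Finset.univ.image (Fin.castLE hk), ‖x j‖ ^ 2 := by
        rw [Finset.sum_image (fun x _ y _ h => Fin.castLE_injective hk h)]
        rfl
    _ ≤ ∑ j : Fin r, ‖x j‖ ^ 2 :=
        Finset.sum_le_sum_of_subset_of_nonneg (Finset.subset_univ _)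
          (fun j _ _ => by positivity)

end Pad

lemma factorize {m d r : ℕ} {s : ℝ} (hs : 0 ≤ s)
    (T : EuclideanSpace ℝ (Fin d) →L[ℝ] EuclideanSpace ℝ (Fin m))
    (hrk : finrank ℝ (LinearMap.range (T : EuclideanSpace ℝ (Fin d) →ₗ[ℝ] EuclideanSpace ℝ (Fin m))) ≤ r)
    (hT : ‖T‖ ≤ s) :
    ∃ (W : EuclideanSpace ℝ (Fin r) →L[ℝ] EuclideanSpace ℝ (Fin m))
      (V : EuclideanSpace ℝ (Fin d) →L[ℝ] EuclideanSpace ℝ (Fin r)),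
      ‖W‖ ≤ 1 ∧ ‖V‖ ≤ s ∧ W ∘L V = T := by
  set T' : EuclideanSpace ℝ (Fin d) →ₗ[ℝ] EuclideanSpace ℝ (Fin m) :=
    (T : EuclideanSpace ℝ (Fin d) →ₗ[ℝ] EuclideanSpace ℝ (Fin m)) with hT'
  set K := LinearMap.range T' with hK
  have hk : finrank ℝ K ≤ r := hrk
  let b := stdOrthonormalBasis ℝ K
  let W₀ : EuclideanSpace ℝ (Fin r) →ₗ[ℝ] EuclideanSpace ℝ (Fin m) :=
    K.subtype ∘ₗ (b.repr.symm.toLinearEquiv.toLinearMap) ∘ₗ padQ hk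
  let V₀ : EuclideanSpace ℝ (Fin d) →ₗ[ℝ] EuclideanSpace ℝ (Fin r) :=
    padP hk ∘ₗ b.repr.toLinearEquiv.toLinearMap ∘ₗ T'.rangeRestrict
  refine ⟨LinearMap.toContinuousLinearMap W₀, LinearMap.toContinuousLinearMap V₀, ?_, ?_, ?_⟩
  · refine ContinuousLinearMap.opNorm_le_bound _ zero_le_one fun x => ?_
    rw [one_mul]
    show ‖W₀ x‖ ≤ ‖x‖
    calc ‖W₀ x‖ = ‖b.repr.symm (padQ hk x)‖ := by
          simp only [W₀, LinearMap.coe_comp, Function.comp_apply, LinearEquiv.coe_coe,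
            LinearIsometryEquiv.coe_toLinearEquiv, Submodule.coe_subtype, Submodule.norm_coe]
      _ = ‖padQ hk x‖ := b.repr.symm.norm_map _
      _ ≤ ‖x‖ := norm_padQ hk x
  · refine ContinuousLinearMap.opNorm_le_bound _ hs fun y => ?_
    show ‖V₀ y‖ ≤ s * ‖y‖
    calc ‖V₀ y‖ = ‖b.repr (T'.rangeRestrict y)‖ := by
          simp only [V₀, LinearMap.coe_comp, Function.comp_apply, LinearEquiv.coe_coe,
            LinearIsometryEquiv.coe_toLinearEquiv, norm_padP]
      _ = ‖T'.rangeRestrict y‖ := b.repr.norm_map _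
      _ = ‖T y‖ := by rw [← Submodule.norm_coe (T'.rangeRestrict y)]; rfl
      _ ≤ ‖T‖ * ‖y‖ := T.le_opNorm y
      _ ≤ s * ‖y‖ := mul_le_mul_of_nonneg_right hT (norm_nonneg y)
  · refine ContinuousLinearMap.ext fun y => ?_
    show W₀ (V₀ y) = T y
    simp only [W₀, V₀, LinearMap.coe_comp, Function.comp_apply,
      LinearEquiv.coe_coe, LinearIsometryEquiv.coe_toLinearEquiv]
    rw [padQ_padP]
    rw [b.repr.symm_apply_apply]
    rfl

lemma rank_eq_toEuclidean {m d : ℕ} (A : Matrix (Fin m) (Fin d) ℝ) :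
    A.rank = finrank ℝ (LinearMap.range (Matrix.toEuclideanLin A)) := by
  rw [Matrix.toEuclideanLin_eq_toLin]
  exact A.rank_eq_finrank_range_toLin _ _

lemma coe_toCLM {E F : Type*} [NormedAddCommGroup E] [NormedSpace ℝ E] [FiniteDimensional ℝ E]
    [NormedAddCommGroup F] [NormedSpace ℝ F] (f : E →L[ℝ] F) :
    LinearMap.toContinuousLinearMap (f : E →ₗ[ℝ] F) = f := by
  ext x
  rfl

set_option maxHeartbeats 2000000 in
/-- parameter-counting cover of low-rank matrices with bounded
spectral norm: the class `S(r,s) = {A : rank A ≤ r, ‖A‖ ≤ s}` admits an internal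
`ε`-cover `C` (in spectral norm) with `log |C| ≤ (m+d)·r·log(1 + 6s/ε)`. -/
theorem lowrank_cover (m d r : ℕ) (s ε : ℝ) (hs : 0 < s) (hε : 0 < ε) :
    ∃ C : Finset (Matrix (Fin m) (Fin d) ℝ),
      (∀ B ∈ C, B.rank ≤ r ∧ specNorm B ≤ s) ∧
      (∀ A : Matrix (Fin m) (Fin d) ℝ, A.rank ≤ r → specNorm A ≤ s →
        ∃ B ∈ C, specNorm (A - B) ≤ ε) ∧
      Real.log C.card ≤ ((m : ℝ) + d) * r * Real.log (1 + 6 * s / ε) := by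
  classical
  set Er := EuclideanSpace ℝ (Fin r)
  set Em := EuclideanSpace ℝ (Fin m)
  set Ed := EuclideanSpace ℝ (Fin d)
  have hδ₁ : (0:ℝ) < ε / (2 * s) := by positivity
  have hδ₂ : (0:ℝ) < ε / 2 := by positivity
  obtain ⟨N₁, hN₁sub, hN₁cov, hN₁card⟩ :=
    exists_net (Er →L[ℝ] Em) (zero_le_one) hδ₁
  obtain ⟨N₂, hN₂sub, hN₂cov, hN₂card⟩ :=
    exists_net (Ed →L[ℝ] Er) hs.le hδ₂
  set G : (Er →L[ℝ] Em) → (Ed →L[ℝ] Er) → Matrix (Fin m) (Fin d) ℝ :=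
    fun W V => Matrix.toEuclideanLin.symm ((W ∘L V : Ed →L[ℝ] Em) : Ed →ₗ[ℝ] Em) with hG
  set C := Finset.image₂ G N₁ N₂ with hC
  have hGlin : ∀ W V, Matrix.toEuclideanLin (G W V) = ((W ∘L V : Ed →L[ℝ] Em) : Ed →ₗ[ℝ] Em) :=
    fun W V => Matrix.toEuclideanLin.apply_symm_apply _
  have hGspec : ∀ W V, specNorm (G W V) = ‖W ∘L V‖ := by
    intro W V
    show ‖LinearMap.toContinuousLinearMap (Matrix.toEuclideanLin (G W V))‖ = _
    rw [hGlin, coe_toCLM]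
  have hGrank : ∀ W V, (G W V).rank ≤ r := by
    intro W V
    rw [rank_eq_toEuclidean, hGlin]
    have h1 : LinearMap.range ((W ∘L V : Ed →L[ℝ] Em) : Ed →ₗ[ℝ] Em) ≤
        LinearMap.range (W : Er →ₗ[ℝ] Em) := by
      show LinearMap.range ((W : Er →ₗ[ℝ] Em) ∘ₗ (V : Ed →ₗ[ℝ] Er)) ≤ _
      exact LinearMap.range_comp_le_range _ _
    calc finrank ℝ (LinearMap.range ((W ∘L V : Ed →L[ℝ] Em) : Ed →ₗ[ℝ] Em))
        ≤ finrank ℝ (LinearMap.range (W : Er →ₗ[ℝ] Em)) := Submodule.finrank_mono h1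
      _ ≤ finrank ℝ Er := LinearMap.finrank_range_le _
      _ = r := finrank_euclideanSpace_fin
  refine ⟨C, ?_, ?_, ?_⟩
  · rintro B hB
    rw [hC] at hB
    obtain ⟨W, hW, V, hV, rfl⟩ := Finset.mem_image₂.1 hB
    refine ⟨hGrank W V, ?_⟩
    rw [hGspec]
    have hWn : ‖W‖ ≤ 1 := mem_closedBall_zero_iff.1 (hN₁sub hW)
    have hVn : ‖V‖ ≤ s := mem_closedBall_zero_iff.1 (hN₂sub hV)
    calc ‖W ∘L V‖ ≤ ‖W‖ * ‖V‖ := ContinuousLinearMap.opNorm_comp_le _ _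
      _ ≤ 1 * s := mul_le_mul hWn hVn (norm_nonneg _) zero_le_one
      _ = s := one_mul s
  · intro A hArank hAnorm
    set T : Ed →L[ℝ] Em := LinearMap.toContinuousLinearMap (Matrix.toEuclideanLin A) with hT
    have hTnorm : ‖T‖ ≤ s := hAnorm
    have hTrank : finrank ℝ (LinearMap.range (T : Ed →ₗ[ℝ] Em)) ≤ r := by
      have : (T : Ed →ₗ[ℝ] Em) = Matrix.toEuclideanLin A := by
        rw [hT]; exact LinearMap.coe_toContinuousLinearMap _
      rw [this, ← rank_eq_toEuclidean]
      exact hArank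
    obtain ⟨W, V, hWn, hVn, hWV⟩ := factorize hs.le T hTrank hTnorm
    obtain ⟨W', hW', hWW'⟩ := hN₁cov W (mem_closedBall_zero_iff.2 hWn)
    obtain ⟨V', hV', hVV'⟩ := hN₂cov V (mem_closedBall_zero_iff.2 hVn)
    refine ⟨G W' V', Finset.mem_image₂_of_mem hW' hV', ?_⟩
    have hW'n : ‖W'‖ ≤ 1 := mem_closedBall_zero_iff.1 (hN₁sub hW')
    have key : specNorm (A - G W' V') = ‖T - W' ∘L V'‖ := by
      show ‖LinearMap.toContinuousLinearMap (Matrix.toEuclideanLin (A - G W' V'))‖ = _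
      rw [map_sub, map_sub, hGlin, coe_toCLM, ← hT]
    rw [key, ← hWV]
    have hsplit : W ∘L V - W' ∘L V' = (W - W') ∘L V + W' ∘L (V - V') := by
      rw [ContinuousLinearMap.sub_comp, ContinuousLinearMap.comp_sub]
      abel
    rw [hsplit]
    calc ‖(W - W') ∘L V + W' ∘L (V - V')‖
        ≤ ‖(W - W') ∘L V‖ + ‖W' ∘L (V - V')‖ := norm_add_le _ _
      _ ≤ ‖W - W'‖ * ‖V‖ + ‖W'‖ * ‖V - V'‖ :=
          add_le_add (ContinuousLinearMap.opNorm_comp_le _ _)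
            (ContinuousLinearMap.opNorm_comp_le _ _)
      _ ≤ (ε / (2 * s)) * s + 1 * (ε / 2) := by
          refine add_le_add (mul_le_mul hWW' hVn (norm_nonneg _) hδ₁.le)
            (mul_le_mul hW'n hVV' (norm_nonneg _) zero_le_one)
      _ = ε := by field_simp; ring
  · have hX1 : (1:ℝ) ≤ 1 + 6 * s / ε := by
      have : 0 ≤ 6 * s / ε := by positivity
      linarith
    have e₁ := (LinearMap.toContinuousLinearMap : (Er →ₗ[ℝ] Em) ≃ₗ[ℝ] (Er →L[ℝ] Em))
    have e₂ := (LinearMap.toContinuousLinearMap : (Ed →ₗ[ℝ] Er) ≃ₗ[ℝ] (Ed →L[ℝ] Er))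
    have hD₁ : finrank ℝ (Er →L[ℝ] Em) = r * m := by
      rw [← e₁.finrank_eq, Module.finrank_linearMap,
        finrank_euclideanSpace_fin, finrank_euclideanSpace_fin]
    have hD₂ : finrank ℝ (Ed →L[ℝ] Er) = d * r := by
      rw [← e₂.finrank_eq, Module.finrank_linearMap,
        finrank_euclideanSpace_fin, finrank_euclideanSpace_fin]
    have hb₁ : 1 + 2 * 1 / (ε / (2 * s)) ≤ 1 + 6 * s / ε := by
      rw [div_div_eq_mul_div]
      have h := (div_le_div_iff_of_pos_right hε).mpr (show (2:ℝ) * 1 * (2 * s) ≤ 6 * s by nlinarith)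
      linarith
    have hb₂ : 1 + 2 * s / (ε / 2) ≤ 1 + 6 * s / ε := by
      rw [div_div_eq_mul_div]
      have h := (div_le_div_iff_of_pos_right hε).mpr (show (2:ℝ) * s * 2 ≤ 6 * s by nlinarith)
      linarith
    have hbase_nonneg₁ : (0:ℝ) ≤ 1 + 2 * 1 / (ε / (2 * s)) := by positivity
    have hbase_nonneg₂ : (0:ℝ) ≤ 1 + 2 * s / (ε / 2) := by positivity
    have hc₁ : (N₁.card : ℝ) ≤ (1 + 6 * s / ε) ^ (r * m) := by
      rw [← hD₁]
      exact hN₁card.trans (pow_le_pow_left₀ hbase_nonneg₁ hb₁ _)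
    have hc₂ : (N₂.card : ℝ) ≤ (1 + 6 * s / ε) ^ (d * r) := by
      rw [← hD₂]
      exact hN₂card.trans (pow_le_pow_left₀ hbase_nonneg₂ hb₂ _)
    have hcard : (C.card : ℝ) ≤ (1 + 6 * s / ε) ^ (r * m + d * r) := by
      calc (C.card : ℝ) ≤ (N₁.card : ℝ) * N₂.card := by
            rw [hC]
            exact_mod_cast Finset.card_image₂_le G N₁ N₂
        _ ≤ (1 + 6 * s / ε) ^ (r * m) * (1 + 6 * s / ε) ^ (d * r) :=
            mul_le_mul hc₁ hc₂ (Nat.cast_nonneg _) (by positivity)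
        _ = (1 + 6 * s / ε) ^ (r * m + d * r) := (pow_add _ _ _).symm
    have hlogX : 0 ≤ Real.log (1 + 6 * s / ε) := Real.log_nonneg hX1
    rcases Nat.eq_zero_or_pos C.card with h0 | hpos
    · rw [h0]
      simp only [Nat.cast_zero, Real.log_zero]
      positivity
    · have hcpos : (0:ℝ) < C.card := by exact_mod_cast hpos
      have := (Real.log_le_log_iff hcpos (by positivity)).2 hcard
      rw [Real.log_pow] at this
      refine this.trans (le_of_eq ?_)
      push_cast
      ring
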